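/- Let (S,L) be a Lie-Rinehart algebra over R, M a right module over the enveloping algebra U, and N a compatible left S⋊L-module. Then M ⊗_S N, equipped with the left L-action α·(m ⊗ n) = −(m·α) ⊗ n + m ⊗ (α·n) and the S-action s·(m ⊗ n) = (m·s) ⊗ n, is a left U-module; that is, (sα)·(m ⊗ n) = s·(α·(m ⊗ n)) for all s ∈ S, α ∈ L. -/
import Mathlib


open TensorProduct

/-- For a Lie-Rinehart algebra `(S,L)` over `R`, a right `U`-module `M`
(with right `L`-action `σ`) and a compatible left `S⋊L`-module `N` (with `L`-action `ρ`),
the tensor product `M ⊗_S N` with left `L`-action `α·(m⊗n) = −(m·α)⊗n + m⊗(α·n)` is a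
left `U`-module: `(sα)·(m⊗n) = s·(α·(m⊗n))`. -/
theorem stmt1 {R S L M N : Type*} [CommRing R] [CommRing S] [Algebra R S]
    [LieRing L] [LieAlgebra R L] [Module S L]
    [AddCommGroup M] [Module S M] [AddCommGroup N] [Module S N]
    (D : L → Derivation R S S)
    (hDsmul : ∀ (s : S) (α : L), D (s • α) = s • D α)
    (σ : L → M → M)
    (hM1 : ∀ (α : L) (s : S) (m : M), s • σ α m = (D α s) • m + σ α (s • m))
    (hM2 : ∀ (s : S) (α : L) (m : M), σ (s • α) m = σ α (s • m))
    (ρ : L → N → N)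
    (hN1 : ∀ (α : L) (s : S) (n : N), ρ α (s • n) = (D α s) • n + s • ρ α n)
    (hN2 : ∀ (s : S) (α : L) (n : N), ρ (s • α) n = s • ρ α n - (D α s) • n) :
    ∀ (s : S) (α : L) (m : M) (n : N),
      (-(σ (s • α) m)) ⊗ₜ[S] n + m ⊗ₜ[S] (ρ (s • α) n)
        = s • ((-(σ α m)) ⊗ₜ[S] n + m ⊗ₜ[S] (ρ α n)) := by
  intro s α m n
  rw [hM2, hN2, smul_add, smul_tmul', smul_tmul', smul_neg, hM1, sub_eq_add_neg,
    tmul_add, tmul_neg, tmul_smul, ← smul_tmul]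
  simp only [neg_one_smul, add_tmul, neg_tmul, smul_tmul, tmul_smul]
  abel
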